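/- Let f ∈ Lip₁(ℝ) and {f_n} ⊂ Lip₁(ℝ) with |f − f_n|_H → 0 as n → ∞, and let μ ∈ P₁(ℝ). Then ∫_ℝ f_n dμ → ∫_ℝ f dμ as n → ∞. In particular, for each x ∈ ℝ one has (∫₀ˣ |f'(y) − f_n'(y)| dy)² ≤ |x| e^{|x|} |f − f_n|²_H and |∫₀ˣ |f'(y) − f_n'(y)| dy| ≤ 2|x|. -/

import Mathlib

open MeasureTheory ProbabilityTheory Set Filter

noncomputable section

/-- The σ-algebra on probability measures on `ℝ`, inherited from the canonical
σ-algebra on measures (generated by evaluation maps). -/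
instance : MeasurableSpace (ProbabilityMeasure ℝ) :=
  MeasurableSpace.comap ((↑) : ProbabilityMeasure ℝ → Measure ℝ) inferInstance

/-- The 1-Wasserstein distance between two probability measures on `ℝ`,
defined as the infimum of `E|ξ₁ - ξ₂|` over all couplings. -/
def W1 (μ ν : ProbabilityMeasure ℝ) : ℝ :=
  sInf { c | ∃ ρ : Measure (ℝ × ℝ), IsProbabilityMeasure ρ ∧
      ρ.map Prod.fst = (μ : Measure ℝ) ∧ ρ.map Prod.snd = (ν : Measure ℝ) ∧
      c = ∫ p, |p.1 - p.2| ∂ρ }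

/-- Real functions on `ℝ` that are Lipschitz with constant 1. -/
def Lip1 : Set (ℝ → ℝ) := { φ | LipschitzWith 1 φ }

/-- The Dirac point mass at `x`, as a probability measure. -/
def dirac1 (x : ℝ) : ProbabilityMeasure ℝ := ⟨Measure.dirac x, inferInstance⟩

/-- A probability measure on `ℝ` has a finite first moment. -/
def FiniteFirstMoment (μ : ProbabilityMeasure ℝ) : Prop :=
  Integrable (fun z : ℝ => |z|) (μ : Measure ℝ)

/-- The type of coefficients `σ, h : [0,T] × C_T × C_T × C_T(P₁) → ℝ`. -/
abbrev Coeff : Type :=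
  ℝ → (ℝ → ℝ) → (ℝ → ℝ) → (ℝ → ProbabilityMeasure ℝ) → ℝ

/-- The path `x` stopped at time `t`, i.e. `s ↦ x (s ∧ t)`. -/
def stopP {α : Type*} (x : ℝ → α) (t : ℝ) : ℝ → α := fun s => x (min s t)

/-- running supremum over `[0,t]` of the distance between two real paths. -/
def pathSup (x x' : ℝ → ℝ) (t : ℝ) : ℝ := ⨆ s : Icc (0:ℝ) t, |x s.1 - x' s.1|

/-- running supremum over `[0,t]` of the `W₁`-distance between two measure paths. -/
def measSup (μ μ' : ℝ → ProbabilityMeasure ℝ) (t : ℝ) : ℝ :=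
  ⨆ s : Icc (0:ℝ) t, W1 (μ s.1) (μ' s.1)

variable {Ω : Type*} [mΩ : MeasurableSpace Ω]

/-- running supremum `ξ*_t = sup_{s ≤ t} |ξ_s|` of a process. -/
def runSup (ξ : ℝ → Ω → ℝ) (t : ℝ) (ω : Ω) : ℝ := ⨆ s : Icc (0:ℝ) t, |ξ s.1 ω|

/-- The natural filtration `F^Y_t = σ{Y_s : s ≤ t}` of a process `Y`. -/
def natFilt (Y : ℝ → Ω → ℝ) (t : ℝ) : MeasurableSpace Ω :=
  ⨆ s ∈ Icc (0:ℝ) t, MeasurableSpace.comap (Y s) inferInstance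

/-- A process `M` is a martingale on `[0,T]` with respect to the family of
σ-algebras `F` and the measure `P`. -/
def MartOn (T : ℝ) (P : Measure Ω) (F : ℝ → MeasurableSpace Ω) (M : ℝ → Ω → ℝ) : Prop :=
  (∀ t ∈ Icc (0:ℝ) T, Integrable (M t) P ∧ StronglyMeasurable[F t] (M t)) ∧
  ∀ s t : ℝ, s ∈ Icc (0:ℝ) T → t ∈ Icc (0:ℝ) T → s ≤ t → condExp (F s) P (M t) =ᵐ[P] M s

/-- `(B¹, B²)` is a two-dimensional Brownian motion on `[0,T]` with respect to
the filtration `F` under `P`. -/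
structure IsBM2 (T : ℝ) (P : Measure Ω) (F : ℝ → MeasurableSpace Ω)
    (B1 B2 : ℝ → Ω → ℝ) : Prop where
  adapted : ∀ t ∈ Icc (0:ℝ) T, StronglyMeasurable[F t] (B1 t) ∧ StronglyMeasurable[F t] (B2 t)
  start : ∀ᵐ ω ∂P, B1 0 ω = 0 ∧ B2 0 ω = 0
  cont : ∀ᵐ ω ∂P, ContinuousOn (fun t => B1 t ω) (Icc 0 T) ∧
      ContinuousOn (fun t => B2 t ω) (Icc 0 T)
  incr_law : ∀ s t : ℝ, 0 ≤ s → s ≤ t → t ≤ T →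
    P.map (fun ω => (B1 t ω - B1 s ω, B2 t ω - B2 s ω)) =
      (gaussianReal 0 (t - s).toNNReal).prod (gaussianReal 0 (t - s).toNNReal)
  incr_indep : ∀ s t : ℝ, 0 ≤ s → s ≤ t → t ≤ T →
    Indep (MeasurableSpace.comap (fun ω => (B1 t ω - B1 s ω, B2 t ω - B2 s ω))
      inferInstance) (F s) P

/-- Assumption (A1): the coefficients `σ, h` are bounded, progressively
measurable (measurable and non-anticipative in the path variables), and
Lipschitz in `(x, μ)`, uniformly in `(t, y)`, with respect to the sup-norm on
paths and the `W₁`-distance on measures. -/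
structure A1 (T : ℝ) (σc hc : Coeff) : Prop where
  bddσ : ∃ K, ∀ t x y μ, |σc t x y μ| ≤ K
  bddh : ∃ K, ∀ t x y μ, |hc t x y μ| ≤ K
  measσ : Measurable fun p : ℝ × (ℝ → ℝ) × (ℝ → ℝ) × (ℝ → ProbabilityMeasure ℝ) =>
      σc p.1 p.2.1 p.2.2.1 p.2.2.2
  meash : Measurable fun p : ℝ × (ℝ → ℝ) × (ℝ → ℝ) × (ℝ → ProbabilityMeasure ℝ) =>
      hc p.1 p.2.1 p.2.2.1 p.2.2.2
  nonantσ : ∀ t x y μ, σc t x y μ = σc t (stopP x t) (stopP y t) (stopP μ t)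
  nonanth : ∀ t x y μ, hc t x y μ = hc t (stopP x t) (stopP y t) (stopP μ t)
  lip : ∃ C > 0, ∀ t ∈ Icc (0:ℝ) T, ∀ x x' y μ μ',
      |σc t x y μ - σc t x' y μ'| ≤ C * (pathSup x x' t + measSup μ μ' t) ∧
      |hc t x y μ - hc t x' y μ'| ≤ C * (pathSup x x' t + measSup μ μ' t)

/-- A function `f = f(t,x)` of class `C^{1,2}_b([0,T] × ℝ)`: bounded and
continuous, with bounded continuous derivatives `∂_t f`, `∂_x f`, `∂²_{xx} f`. -/
structure C12b (f : ℝ → ℝ → ℝ) : Prop where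
  cont : Continuous fun p : ℝ × ℝ => f p.1 p.2
  bdd : ∃ K, ∀ t x, |f t x| ≤ K
  dt : ∃ ft : ℝ → ℝ → ℝ, (∀ t x, HasDerivAt (fun s => f s x) (ft t x) t) ∧
      Continuous (fun p : ℝ × ℝ => ft p.1 p.2) ∧ ∃ K, ∀ t x, |ft t x| ≤ K
  dx : ∃ fx fxx : ℝ → ℝ → ℝ,
      (∀ t x, HasDerivAt (fun z => f t z) (fx t x) x) ∧
      (∀ t x, HasDerivAt (fun z => fx t z) (fxx t x) x) ∧
      Continuous (fun p : ℝ × ℝ => fx p.1 p.2) ∧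
      Continuous (fun p : ℝ × ℝ => fxx p.1 p.2) ∧
      (∃ K, ∀ t x, |fx t x| ≤ K) ∧ (∃ K, ∀ t x, |fxx t x| ≤ K)

/-- Assumption (A2): the observation coefficient has the separated form
`h(t,x,y_{·∧t}) = Σ_{i=1}^N f_i(t, x_t) g_i(t, y_{·∧t})` with `f_i ∈ C^{1,2}_b`
and `g_i` bounded measurable; in particular `h` depends on the state path only
through its current value and does not depend on the measure variable. -/
def A2 (hc : Coeff) : Prop :=
  ∃ (N : ℕ) (f : Fin N → ℝ → ℝ → ℝ) (g : Fin N → ℝ → (ℝ → ℝ) → ℝ),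
    (∀ i, C12b (f i)) ∧
    (∀ i, Measurable (fun p : ℝ × (ℝ → ℝ) => g i p.1 p.2) ∧
      (∃ K, ∀ t y, |g i t y| ≤ K) ∧ ∀ t y, g i t y = g i t (stopP y t)) ∧
    ∀ t x y μ, hc t x y μ = ∑ i, f i t (x t) * g i t y

/-- Evaluation `σ(t, X_{·∧t}(ω), Y_{·∧t}(ω), μ_{·∧t}(ω))` of a coefficient
along the (stopped) paths of the processes `X, Y, μ`. -/
def coefAt (σc : Coeff) (X Y : ℝ → Ω → ℝ) (μ : ℝ → Ω → ProbabilityMeasure ℝ)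
    (t : ℝ) (ω : Ω) : ℝ :=
  σc t (fun r => X (min r t) ω) (fun r => Y (min r t) ω) (fun r => μ (min r t) ω)

/-- The process `μ` of probability measures is adapted to the filtration
generated by `Y`. -/
def AdaptedMeas (T : ℝ) (Y : ℝ → Ω → ℝ) (μ : ℝ → Ω → ProbabilityMeasure ℝ) : Prop :=
  ∀ t ∈ Icc (0:ℝ) T, Measurable[natFilt Y t] (μ t)

/-- `t ↦ μ_t` is continuous on `[0,T]` for the `W₁`-distance. -/
def W1ContOn (T : ℝ) (μ : ℝ → ProbabilityMeasure ℝ) : Prop :=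
  ∀ t ∈ Icc (0:ℝ) T, ∀ ε > 0, ∃ δ > 0, ∀ s ∈ Icc (0:ℝ) T, |s - t| < δ →
    W1 (μ s) (μ t) < ε

/-- Membership in `S^p_{F^Y}(P₁)` : continuous (in `W₁`), `F^Y`-adapted,
`P₁(ℝ)`-valued processes whose running supremum of the `W₁`-distance to `δ₀`
has a finite `p`-th moment. -/
def MemSp (p T : ℝ) (Q0 : Measure Ω) (Y : ℝ → Ω → ℝ)
    (μ : ℝ → Ω → ProbabilityMeasure ℝ) : Prop :=
  AdaptedMeas T Y μ ∧
  (∀ᵐ ω ∂Q0, W1ContOn T (fun t => μ t ω)) ∧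
  Integrable (fun ω => (⨆ t : Icc (0:ℝ) T, W1 (μ t.1 ω) (dirac1 0)) ^ p) Q0

/-- `X` is a (weak, martingale-problem formulation) solution of
`dX_t = σ(t, X_{·∧t}, Y_{·∧t}, μ_{·∧t}) dB¹_t`, `X_0 = x` : `X` is a continuous
adapted martingale started at `x` whose quadratic variation is
`∫₀ᵗ σ(...)² ds`, whose covariation with `B¹` is `∫₀ᵗ σ(...) ds` and whose
covariation with `Y` vanishes. -/
structure SolvesX (T x : ℝ) (σc : Coeff) (Q0 : Measure Ω) (F : ℝ → MeasurableSpace Ω)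
    (B1 Y : ℝ → Ω → ℝ) (μ : ℝ → Ω → ProbabilityMeasure ℝ) (X : ℝ → Ω → ℝ) : Prop where
  start : ∀ᵐ ω ∂Q0, X 0 ω = x
  cont : ∀ᵐ ω ∂Q0, ContinuousOn (fun t => X t ω) (Icc 0 T)
  mart : MartOn T Q0 F X
  qv : MartOn T Q0 F fun t ω => (X t ω) ^ 2 - ∫ s in (0:ℝ)..t, (coefAt σc X Y μ s ω) ^ 2
  covB1 : MartOn T Q0 F fun t ω => X t ω * B1 t ω - ∫ s in (0:ℝ)..t, coefAt σc X Y μ s ω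
  covY : MartOn T Q0 F fun t ω => X t ω * Y t ω

/-- `L` is a (martingale-problem formulation) solution of
`dL_t = h(t, X_{·∧t}, Y_{·∧t}, μ_{·∧t}) L_t dY_t`, `L_0 = 1` : `L` is a
positive continuous adapted martingale started at `1` with quadratic variation
`∫₀ᵗ (h L)² ds`, covariation `∫₀ᵗ h L ds` with `Y` and vanishing covariation
with `B¹`. -/
structure SolvesL (T : ℝ) (hc : Coeff) (Q0 : Measure Ω) (F : ℝ → MeasurableSpace Ω)
    (B1 Y X : ℝ → Ω → ℝ) (μ : ℝ → Ω → ProbabilityMeasure ℝ) (L : ℝ → Ω → ℝ) : Prop where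
  start : ∀ᵐ ω ∂Q0, L 0 ω = 1
  cont : ∀ᵐ ω ∂Q0, ContinuousOn (fun t => L t ω) (Icc 0 T)
  pos : ∀ᵐ ω ∂Q0, ∀ t ∈ Icc (0:ℝ) T, 0 < L t ω
  mart : MartOn T Q0 F L
  qv : MartOn T Q0 F fun t ω =>
      (L t ω) ^ 2 - ∫ s in (0:ℝ)..t, (coefAt hc X Y μ s ω * L s ω) ^ 2
  covY : MartOn T Q0 F fun t ω =>
      L t ω * Y t ω - ∫ s in (0:ℝ)..t, coefAt hc X Y μ s ω * L s ω
  covB1 : MartOn T Q0 F fun t ω => L t ω * B1 t ω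

/-- `ν` is (a version of) the image `T(μ)` of `μ` under the solution map:
`ν_t(A) = E^{Q⁰}[L^μ_t 1_{X^μ_t ∈ A} | F^Y_t] / E^{Q⁰}[L^μ_t | F^Y_t]`. -/
def IsSolMap (T : ℝ) (Q0 : Measure Ω) (Y X L : ℝ → Ω → ℝ)
    (ν : ℝ → Ω → ProbabilityMeasure ℝ) : Prop :=
  ∀ t ∈ Icc (0:ℝ) T, ∀ A : Set ℝ, MeasurableSet A →
    (fun ω => (((ν t ω : Measure ℝ) A).toReal)) =ᵐ[Q0]
      fun ω => (condExp (natFilt Y t) Q0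
          (fun ω' => A.indicator (fun _ => (1:ℝ)) (X t ω') * L t ω') ω) /
        (condExp (natFilt Y t) Q0 (L t) ω)

/-- `ν` is (a version of) the conditional law process `μ^{X|Y}` of `X` given the
filtration generated by `Y`, under the measure `P`. -/
def IsCondLaw (T : ℝ) (P : Measure Ω) (Y X : ℝ → Ω → ℝ)
    (ν : ℝ → Ω → ProbabilityMeasure ℝ) : Prop :=
  AdaptedMeas T Y ν ∧
  ∀ t ∈ Icc (0:ℝ) T, ∀ A : Set ℝ, MeasurableSet A →
    (fun ω => (((ν t ω : Measure ℝ) A).toReal)) =ᵐ[P]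
      condExp (natFilt Y t) P (fun ω' => A.indicator (fun _ => (1:ℝ)) (X t ω'))

end
noncomputable section

open scoped NNReal


/-- FTC inequality for continuous monotone functions. -/
lemma mono_cont_integral_deriv_le {g : ℝ → ℝ} (hm : Monotone g) (hc : Continuous g)
    {a b : ℝ} (hab : a ≤ b) :
    ∫ y in a..b, deriv g y ≤ g b - g a := by
  set μ := hm.stieltjesFunction.measure with hμ
  have hae : ∀ᵐ x, HasDerivAt g ((μ.rnDeriv volume x).toReal) x := hm.ae_hasDerivAt
  have hEq : (fun x => deriv g x) =ᵐ[volume] fun x => (μ.rnDeriv volume x).toReal :=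
    hae.mono fun x hx => hx.deriv
  have hst : ∀ c : ℝ, hm.stieltjesFunction c = g c := by
    intro c
    rw [hm.stieltjesFunction_eq]
    exact rightLim_eq_of_tendsto ((hc.tendsto c).mono_left nhdsWithin_le_nhds)
  have hμIoc : μ (Ioc a b) = ENNReal.ofReal (g b - g a) := by
    rw [hμ, StieltjesFunction.measure_Ioc, hst, hst]
  rw [intervalIntegral.integral_of_le hab]
  calc ∫ y in Ioc a b, deriv g y
      = ∫ y in Ioc a b, (μ.rnDeriv volume y).toReal :=
        integral_congr_ae (ae_restrict_of_ae hEq)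
    _ ≤ (μ (Ioc a b)).toReal :=
        Measure.setIntegral_toReal_rnDeriv_le (by rw [hμIoc]; exact ENNReal.ofReal_ne_top)
    _ ≤ g b - g a := by
        rw [hμIoc]
        rw [ENNReal.toReal_ofReal (sub_nonneg.2 (hm hab))]

lemma lip_abs_deriv_le_one {f : ℝ → ℝ} (hf : LipschitzWith 1 f) (y : ℝ) : |deriv f y| ≤ 1 := by
  have h : ‖fderiv ℝ f y‖ ≤ ((1 : ℝ≥0) : ℝ) := norm_fderiv_le_of_lipschitz ℝ hf
  calc |deriv f y| = ‖fderiv ℝ f y 1‖ := by rw [fderiv_apply_one_eq_deriv, Real.norm_eq_abs]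
    _ ≤ ‖fderiv ℝ f y‖ * ‖(1:ℝ)‖ := (fderiv ℝ f y).le_opNorm 1
    _ ≤ 1 := by simpa using h

lemma lip_dist {f : ℝ → ℝ} (hf : LipschitzWith 1 f) (x y : ℝ) : |f x - f y| ≤ |x - y| := by
  have := hf.dist_le_mul x y
  simpa [Real.dist_eq] using this

lemma intervalIntegrable_of_bdd {g : ℝ → ℝ} (hg : Measurable g) {C : ℝ}
    (h : ∀ y, |g y| ≤ C) (a b : ℝ) : IntervalIntegrable g volume a b := by
  refine IntervalIntegrable.mono_fun' (g := fun _ => C) intervalIntegrable_const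
    hg.aestronglyMeasurable (Eventually.of_forall fun y => ?_)
  simpa using h y

/-- FTC for 1-Lipschitz functions. -/
lemma lip_ftc {f : ℝ → ℝ} (hf : LipschitzWith 1 f) {a b : ℝ} (hab : a ≤ b) :
    ∫ y in a..b, deriv f y = f b - f a := by
  set g : ℝ → ℝ := fun x => f x + x with hg
  set k : ℝ → ℝ := fun x => x - f x with hk
  have hgm : Monotone g := by
    intro x y hxy
    simp only [hg]
    have : f x - f y ≤ |x - y| := (le_abs_self _).trans (by simpa using (lip_dist hf x y))
    rw [abs_of_nonpos (by linarith : x - y ≤ 0)] at this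
    linarith
  have hkm : Monotone k := by
    intro x y hxy
    have : f y - f x ≤ |y - x| := (le_abs_self _).trans (by simpa using (lip_dist hf y x))
    rw [abs_of_nonneg (by linarith : (0:ℝ) ≤ y - x)] at this
    simp only [hk]
    linarith
  have hgc : Continuous g := hf.continuous.add continuous_id
  have hkc : Continuous k := continuous_id.sub hf.continuous
  -- a.e. derivative identities
  have haeg : ∀ᵐ x, HasDerivAt g ((hgm.stieltjesFunction.measure.rnDeriv volume x).toReal) x :=
    hgm.ae_hasDerivAt
  have haek : ∀ᵐ x, HasDerivAt k ((hkm.stieltjesFunction.measure.rnDeriv volume x).toReal) x :=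
    hkm.ae_hasDerivAt
  have hEqg : (fun x => deriv g x) =ᵐ[volume] fun x => deriv f x + 1 := by
    filter_upwards [haeg] with x hx
    have hfd : HasDerivAt f ((hgm.stieltjesFunction.measure.rnDeriv volume x).toReal - 1) x := by
      have h := hx.sub (hasDerivAt_id x); have he : g - id = f := by funext y; simp [hg]
      rwa [he] at h
    rw [hx.deriv, hfd.deriv]
    ring
  have hEqk : (fun x => deriv k x) =ᵐ[volume] fun x => 1 - deriv f x := by
    filter_upwards [haek] with x hx
    have hfd : HasDerivAt f (1 - (hkm.stieltjesFunction.measure.rnDeriv volume x).toReal) x := by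
      have h := (hasDerivAt_id x).sub hx; have he : id - k = f := by funext y; simp [hk]
      rwa [he] at h
    rw [hx.deriv, hfd.deriv]
    ring
  have hint : IntervalIntegrable (deriv f) volume a b :=
    intervalIntegrable_of_bdd (measurable_deriv f) (lip_abs_deriv_le_one hf) a b
  have h1 : ∫ y in a..b, deriv f y ≤ f b - f a := by
    have hle := mono_cont_integral_deriv_le hgm hgc hab
    have hcong : ∫ y in a..b, deriv g y = (∫ y in a..b, deriv f y) + (b - a) := by
      rw [intervalIntegral.integral_congr_ae
        (by filter_upwards [hEqg] with x hx _ using hx),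
        intervalIntegral.integral_add hint intervalIntegrable_const]
      simp
    rw [hcong] at hle
    simp only [hg] at hle
    linarith
  have h2 : f b - f a ≤ ∫ y in a..b, deriv f y := by
    have hle := mono_cont_integral_deriv_le hkm hkc hab
    have hcong : ∫ y in a..b, deriv k y = (b - a) - ∫ y in a..b, deriv f y := by
      rw [intervalIntegral.integral_congr_ae
        (by filter_upwards [hEqk] with x hx _ using hx),
        intervalIntegral.integral_sub intervalIntegrable_const hint]
      simp
    rw [hcong] at hle
    simp only [hk] at hle
    linarith
  linarith

lemma lip_ftc_all {f : ℝ → ℝ} (hf : LipschitzWith 1 f) (z : ℝ) :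
    ∫ y in (0:ℝ)..z, deriv f y = f z - f 0 := by
  rcases le_total 0 z with hz | hz
  · exact lip_ftc hf hz
  · rw [intervalIntegral.integral_symm, lip_ftc hf hz]
    ring

lemma integrable_exp_neg_abs' : Integrable (fun y : ℝ => Real.exp (-|y|)) := by
  have h1 : IntegrableOn (fun y : ℝ => Real.exp (-|y|)) (Iic (0:ℝ)) := by
    refine (integrableOn_exp_Iic 0).congr_fun (fun y hy => ?_) measurableSet_Iic
    rw [abs_of_nonpos (mem_Iic.1 hy), neg_neg]
  have h2 : IntegrableOn (fun y : ℝ => Real.exp (-|y|)) (Ioi (0:ℝ)) := by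
    refine (exp_neg_integrableOn_Ioi 0 one_pos).congr_fun (fun y hy => ?_) measurableSet_Ioi
    rw [abs_of_pos (mem_Ioi.1 hy)]; simp
  have := h1.union h2
  rwa [Iic_union_Ioi, integrableOn_univ] at this

/-- Cauchy–Schwarz step. -/
lemma cs_aux {g : ℝ → ℝ} (hg : Measurable g) (hg0 : ∀ y, 0 ≤ g y) (hg2 : ∀ y, g y ≤ 2)
    (a b : ℝ) :
    (∫ y in Ioc a b, g y) ^ 2 ≤
      (∫ y in Ioc a b, g y ^ 2 * Real.exp (-|y|)) * ∫ y in Ioc a b, Real.exp |y| := by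
  set ν := volume.restrict (Ioc a b) with hν
  haveI : IsFiniteMeasure ν := by
    constructor
    rw [hν, Measure.restrict_apply_univ, Real.volume_Ioc]
    exact ENNReal.ofReal_lt_top
  set u : ℝ → ℝ := fun y => g y * Real.exp (-|y| / 2) with hu
  set v : ℝ → ℝ := fun y => Real.exp (|y| / 2) with hv
  have huv : ∀ y, u y * v y = g y := by
    intro y
    rw [hu, hv]
    simp only [mul_assoc, ← Real.exp_add]
    have h0 : -|y| / 2 + |y| / 2 = 0 := by ring
    rw [h0, Real.exp_zero, mul_one]
  have hu2 : ∀ y, u y ^ 2 = g y ^ 2 * Real.exp (-|y|) := by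
    intro y
    rw [hu, mul_pow, pow_two (Real.exp _), ← Real.exp_add]
    have h0 : -|y| / 2 + -|y| / 2 = -|y| := by ring
    rw [h0]
  have hv2 : ∀ y, v y ^ 2 = Real.exp |y| := by
    intro y
    rw [hv]
    rw [pow_two, ← Real.exp_add]
    have h0 : |y| / 2 + |y| / 2 = |y| := by ring
    rw [h0]
  have humeas : AEStronglyMeasurable u ν :=
    (hg.mul ((measurable_abs.neg.div_const 2).exp)).aestronglyMeasurable
  have hvmeas : AEStronglyMeasurable v ν :=
    ((measurable_abs.div_const 2).exp).aestronglyMeasurable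
  have hubdd : MemLp u (ENNReal.ofReal 2) ν := by
    refine MemLp.of_bound humeas 2 (Eventually.of_forall fun y => ?_)
    rw [Real.norm_eq_abs, hu, abs_mul, abs_of_nonneg (hg0 y),
      abs_of_nonneg (Real.exp_nonneg _)]
    calc g y * Real.exp (-|y| / 2) ≤ 2 * 1 := by
          refine mul_le_mul (hg2 y) ?_ (Real.exp_nonneg _) (by norm_num)
          rw [Real.exp_le_one_iff]
          have := abs_nonneg y
          linarith
      _ = 2 := by norm_num
  have hvbdd : MemLp v (ENNReal.ofReal 2) ν := by
    refine MemLp.of_bound hvmeas (Real.exp ((max |a| |b|) / 2)) ?_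
    rw [hν, ae_restrict_iff' measurableSet_Ioc]
    refine Eventually.of_forall fun y hy => ?_
    rw [Real.norm_eq_abs, hv, abs_of_nonneg (Real.exp_nonneg _), Real.exp_le_exp]
    have h1 : -|a| ≤ y := le_trans (neg_abs_le a) hy.1.le
    have h2 : y ≤ |b| := le_trans hy.2 (le_abs_self b)
    have : |y| ≤ max |a| |b| := by
      rw [abs_le]
      constructor
      · exact le_trans (neg_le_neg (le_max_left |a| |b|)) h1
      · exact le_trans h2 (le_max_right |a| |b|)
    linarith
  have hCS := integral_mul_le_Lp_mul_Lq_of_nonneg (Real.holderConjugate_iff_eq_conjExponent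
      (by norm_num : (1:ℝ) < 2) |>.2 (by norm_num))
    (Eventually.of_forall fun y => mul_nonneg (hg0 y) (Real.exp_nonneg _))
    (Eventually.of_forall fun y => Real.exp_nonneg _) hubdd hvbdd
  -- hCS : ∫ u * v ∂ν ≤ (∫ u ^ (2:ℝ))^(1/2) * (∫ v ^ (2:ℝ))^(1/2)
  have hint_uv : ∫ y, u y * v y ∂ν = ∫ y in Ioc a b, g y := by
    rw [hν]; exact integral_congr_ae (Eventually.of_forall fun y => huv y)
  have hrpow : ∀ w : ℝ, w ^ (2:ℝ) = w ^ (2:ℕ) := fun w => by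
    rw [show (2:ℝ) = ((2:ℕ):ℝ) by norm_num, Real.rpow_natCast]
  have hint_u : ∫ y, u y ^ (2:ℝ) ∂ν = ∫ y in Ioc a b, g y ^ 2 * Real.exp (-|y|) := by
    rw [hν]
    refine integral_congr_ae (Eventually.of_forall fun y => ?_)
    show u y ^ (2:ℝ) = g y ^ 2 * Real.exp (-|y|)
    rw [hrpow, hu2 y]
  have hint_v : ∫ y, v y ^ (2:ℝ) ∂ν = ∫ y in Ioc a b, Real.exp |y| := by
    rw [hν]
    refine integral_congr_ae (Eventually.of_forall fun y => ?_)
    show v y ^ (2:ℝ) = Real.exp |y|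
    rw [hrpow, hv2 y]
  rw [hint_uv, hint_u, hint_v] at hCS
  set A := ∫ y in Ioc a b, g y ^ 2 * Real.exp (-|y|) with hA
  set B := ∫ y in Ioc a b, Real.exp |y| with hB
  have hA0 : 0 ≤ A :=
    integral_nonneg fun y => mul_nonneg (sq_nonneg _) (Real.exp_nonneg _)
  have hB0 : 0 ≤ B := integral_nonneg fun y => Real.exp_nonneg _
  have hg_int0 : 0 ≤ ∫ y in Ioc a b, g y := integral_nonneg fun y => hg0 y
  have hsq : (A ^ ((1:ℝ)/2) * B ^ ((1:ℝ)/2)) ^ 2 = A * B := by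
    rw [mul_pow, ← Real.rpow_natCast (A ^ ((1:ℝ)/2)) 2, ← Real.rpow_natCast (B ^ ((1:ℝ)/2)) 2,
      ← Real.rpow_mul hA0, ← Real.rpow_mul hB0]
    norm_num
  calc (∫ y in Ioc a b, g y) ^ 2 ≤ (A ^ ((1:ℝ)/2) * B ^ ((1:ℝ)/2)) ^ 2 := by
        apply pow_le_pow_left₀ hg_int0 hCS
    _ = A * B := hsq

lemma key_bound {g : ℝ → ℝ} (hg : Measurable g) (hg0 : ∀ y, 0 ≤ g y) (hg2 : ∀ y, g y ≤ 2)
    {a b c : ℝ} (hab : a ≤ b) (hc : ∀ y ∈ Ioc a b, |y| ≤ c)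
    (hI : Integrable (fun y => g y ^ 2 * Real.exp (-|y|))) :
    (∫ y in Ioc a b, g y) ^ 2 ≤
      (b - a) * Real.exp c * ∫ y, g y ^ 2 * Real.exp (-|y|) := by
  have hCS := cs_aux hg hg0 hg2 a b
  set A := ∫ y in Ioc a b, g y ^ 2 * Real.exp (-|y|) with hA
  set B := ∫ y in Ioc a b, Real.exp |y| with hB
  set I := ∫ y, g y ^ 2 * Real.exp (-|y|) with hI'
  have hA0 : 0 ≤ A := integral_nonneg fun y => mul_nonneg (sq_nonneg _) (Real.exp_nonneg _)
  have hB0 : 0 ≤ B := integral_nonneg fun y => Real.exp_nonneg _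
  have hI0 : 0 ≤ I := integral_nonneg fun y => mul_nonneg (sq_nonneg _) (Real.exp_nonneg _)
  have hAle : A ≤ I :=
    setIntegral_le_integral hI
      (Eventually.of_forall fun y => mul_nonneg (sq_nonneg _) (Real.exp_nonneg _))
  have hBle : B ≤ (b - a) * Real.exp c := by
    have h1 : B ≤ ∫ _ in Ioc a b, Real.exp c := by
      refine setIntegral_mono_on ?_ ?_ measurableSet_Ioc fun y hy => ?_
      · exact (Real.continuous_exp.comp continuous_abs).integrableOn_Ioc
      · exact integrableOn_const (by rw [Real.volume_Ioc]; exact ENNReal.ofReal_ne_top)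
      · exact Real.exp_le_exp.2 (hc y hy)
    have h2 : ∫ _ in Ioc a b, Real.exp c = (b - a) * Real.exp c := by
      rw [setIntegral_const, measureReal_def, Real.volume_Ioc, ENNReal.toReal_ofReal (by linarith), smul_eq_mul]
    linarith
  calc (∫ y in Ioc a b, g y) ^ 2 ≤ A * B := hCS
    _ ≤ A * ((b - a) * Real.exp c) := mul_le_mul_of_nonneg_left hBle hA0
    _ ≤ I * ((b - a) * Real.exp c) :=
        mul_le_mul_of_nonneg_right hAle
          (mul_nonneg (by linarith) (Real.exp_nonneg _))
    _ = (b - a) * Real.exp c * I := by ring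

lemma deriv_diff_abs_le_two {f1 f2 : ℝ → ℝ} (h1 : LipschitzWith 1 f1)
    (h2 : LipschitzWith 1 f2) (y : ℝ) : |deriv f1 y - deriv f2 y| ≤ 2 := by
  have := lip_abs_deriv_le_one h1 y
  have := lip_abs_deriv_le_one h2 y
  have h := abs_sub (deriv f1 y) (deriv f2 y)
  calc |deriv f1 y - deriv f2 y| ≤ |deriv f1 y| + |deriv f2 y| := abs_sub _ _
    _ ≤ 2 := by linarith

lemma integrable_sq_exp {f1 f2 : ℝ → ℝ} (h1 : LipschitzWith 1 f1) (h2 : LipschitzWith 1 f2) :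
    Integrable (fun y => (deriv f1 y - deriv f2 y) ^ 2 * Real.exp (-|y|)) := by
  refine Integrable.mono' (integrable_exp_neg_abs'.const_mul 4)
    ((((measurable_deriv f1).sub (measurable_deriv f2)).pow_const 2).mul
      ((measurable_abs.neg).exp)).aestronglyMeasurable
    (Eventually.of_forall fun y => ?_)
  rw [Real.norm_eq_abs, abs_mul, abs_of_nonneg (Real.exp_nonneg _), abs_of_nonneg (sq_nonneg _)]
  have hb := deriv_diff_abs_le_two h1 h2 y
  have : (deriv f1 y - deriv f2 y) ^ 2 ≤ 4 := by
    have := sq_le_sq' (by linarith [abs_le.1 hb]) (abs_le.1 hb).2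
    nlinarith [abs_le.1 hb]
  exact mul_le_mul_of_nonneg_right this (Real.exp_nonneg _)

lemma claim1 {f1 f2 : ℝ → ℝ} (h1 : LipschitzWith 1 f1) (h2 : LipschitzWith 1 f2) (x : ℝ) :
    (∫ y in (0:ℝ)..x, |deriv f1 y - deriv f2 y|) ^ 2 ≤
      |x| * Real.exp |x| * ∫ y, (deriv f1 y - deriv f2 y) ^ 2 * Real.exp (-|y|) := by
  set g : ℝ → ℝ := fun y => |deriv f1 y - deriv f2 y| with hgdef
  have hg : Measurable g := ((measurable_deriv f1).sub (measurable_deriv f2)).abs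
  have hg0 : ∀ y, 0 ≤ g y := fun y => abs_nonneg _
  have hg2 : ∀ y, g y ≤ 2 := fun y => deriv_diff_abs_le_two h1 h2 y
  have hIeq : (fun y => g y ^ 2 * Real.exp (-|y|)) =
      fun y => (deriv f1 y - deriv f2 y) ^ 2 * Real.exp (-|y|) := by
    funext y; rw [hgdef, sq_abs]
  have hI : Integrable (fun y => g y ^ 2 * Real.exp (-|y|)) := by
    rw [hIeq]; exact integrable_sq_exp h1 h2
  rcases le_total 0 x with hx | hx
  · rw [intervalIntegral.integral_of_le hx]
    have hc : ∀ y ∈ Ioc (0:ℝ) x, |y| ≤ |x| := fun y hy => by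
      rw [abs_of_pos hy.1, abs_of_nonneg hx]; exact hy.2
    have := key_bound hg hg0 hg2 hx hc hI
    rw [hIeq] at this
    calc (∫ y in Ioc (0:ℝ) x, g y) ^ 2
        ≤ (x - 0) * Real.exp |x| * ∫ y, (deriv f1 y - deriv f2 y) ^ 2 * Real.exp (-|y|) := this
      _ = |x| * Real.exp |x| * ∫ y, (deriv f1 y - deriv f2 y) ^ 2 * Real.exp (-|y|) := by
          rw [sub_zero, abs_of_nonneg hx]
  · rw [intervalIntegral.integral_symm, intervalIntegral.integral_of_le hx, neg_sq]
    have hc : ∀ y ∈ Ioc x (0:ℝ), |y| ≤ |x| := fun y hy => by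
      rw [abs_of_nonpos hy.2, abs_of_nonpos hx]
      exact neg_le_neg hy.1.le
    have := key_bound hg hg0 hg2 hx hc hI
    rw [hIeq] at this
    calc (∫ y in Ioc x (0:ℝ), g y) ^ 2
        ≤ (0 - x) * Real.exp |x| * ∫ y, (deriv f1 y - deriv f2 y) ^ 2 * Real.exp (-|y|) := this
      _ = |x| * Real.exp |x| * ∫ y, (deriv f1 y - deriv f2 y) ^ 2 * Real.exp (-|y|) := by
          rw [zero_sub, abs_of_nonpos hx]

lemma claim2 {f1 f2 : ℝ → ℝ} (h1 : LipschitzWith 1 f1) (h2 : LipschitzWith 1 f2) (x : ℝ) :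
    |(∫ y in (0:ℝ)..x, |deriv f1 y - deriv f2 y|)| ≤ 2 * |x| := by
  have := intervalIntegral.norm_integral_le_of_norm_le_const
    (a := (0:ℝ)) (b := x) (C := 2) (f := fun y => |deriv f1 y - deriv f2 y|)
    (fun y _ => by rw [Real.norm_eq_abs, abs_abs]; exact deriv_diff_abs_le_two h1 h2 y)
  simpa [Real.norm_eq_abs] using this

lemma diff_bound {f1 f2 : ℝ → ℝ} (h1 : LipschitzWith 1 f1) (h2 : LipschitzWith 1 f2) (z : ℝ) :
    |f1 z - f2 z| ≤ |f1 0 - f2 0| +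
      Real.sqrt (|z| * Real.exp |z| * ∫ y, (deriv f1 y - deriv f2 y) ^ 2 * Real.exp (-|y|)) := by
  have hint1 := intervalIntegrable_of_bdd (measurable_deriv f1) (lip_abs_deriv_le_one h1) 0 z
  have hint2 := intervalIntegrable_of_bdd (measurable_deriv f2) (lip_abs_deriv_le_one h2) 0 z
  have hsub : ∫ y in (0:ℝ)..z, (deriv f1 y - deriv f2 y) =
      (f1 z - f2 z) - (f1 0 - f2 0) := by
    rw [intervalIntegral.integral_sub hint1 hint2, lip_ftc_all h1 z, lip_ftc_all h2 z]
    ring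
  have habs : |∫ y in (0:ℝ)..z, (deriv f1 y - deriv f2 y)| ≤
      |(∫ y in (0:ℝ)..z, |deriv f1 y - deriv f2 y|)| := by
    simpa [Real.norm_eq_abs] using intervalIntegral.norm_integral_le_abs_integral_norm
      (f := fun y => deriv f1 y - deriv f2 y) (a := (0:ℝ)) (b := z) (μ := volume)
  have hsq : |(∫ y in (0:ℝ)..z, |deriv f1 y - deriv f2 y|)| ≤
      Real.sqrt (|z| * Real.exp |z| *
        ∫ y, (deriv f1 y - deriv f2 y) ^ 2 * Real.exp (-|y|)) := by
    rw [← Real.sqrt_sq_eq_abs]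
    exact Real.sqrt_le_sqrt (claim1 h1 h2 z)
  have key : f1 z - f2 z = (f1 0 - f2 0) + ∫ y in (0:ℝ)..z, (deriv f1 y - deriv f2 y) := by
    rw [hsub]; ring
  calc |f1 z - f2 z|
      = |(f1 0 - f2 0) + ∫ y in (0:ℝ)..z, (deriv f1 y - deriv f2 y)| := by rw [← key]
    _ ≤ |f1 0 - f2 0| + |∫ y in (0:ℝ)..z, (deriv f1 y - deriv f2 y)| := abs_add_le _ _
    _ ≤ _ := by
        have := le_trans habs hsq
        linarith


/-- Convergence step in Lemma 2.1: if `f, f_n ∈ Lip₁(ℝ)` with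
`|f − f_n|_ℍ → 0` and `μ ∈ P₁(ℝ)`, then `∫ f_n dμ → ∫ f dμ`; moreover, for
each `x ∈ ℝ`, `(∫₀ˣ |f'−f_n'| dy)² ≤ |x| e^{|x|} |f − f_n|²_ℍ` and
`|∫₀ˣ |f'−f_n'| dy| ≤ 2|x|`. -/
theorem lip_integral_convergence (f : ℝ → ℝ) (fn : ℕ → ℝ → ℝ)
    (hf : f ∈ Lip1) (hfn : ∀ n, fn n ∈ Lip1)
    (hconv : Filter.Tendsto
      (fun n => (f 0 - fn n 0) ^ 2 +
        ∫ y, (deriv f y - deriv (fn n) y) ^ 2 * Real.exp (-|y|))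
      Filter.atTop (nhds 0))
    (μ : ProbabilityMeasure ℝ) (hμ : FiniteFirstMoment μ) :
    Filter.Tendsto (fun n => ∫ z, fn n z ∂(μ : Measure ℝ)) Filter.atTop
      (nhds (∫ z, f z ∂(μ : Measure ℝ))) ∧
    ∀ (n : ℕ) (x : ℝ),
      (∫ y in (0:ℝ)..x, |deriv f y - deriv (fn n) y|) ^ 2 ≤
        |x| * Real.exp |x| *
          ((f 0 - fn n 0) ^ 2 +
            ∫ y, (deriv f y - deriv (fn n) y) ^ 2 * Real.exp (-|y|)) ∧
      |(∫ y in (0:ℝ)..x, |deriv f y - deriv (fn n) y|)| ≤ 2 * |x| := by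

  have hfL : LipschitzWith 1 f := hf
  have hfnL : ∀ n, LipschitzWith 1 (fn n) := fun n => hfn n
  set H : ℕ → ℝ := fun n => (f 0 - fn n 0) ^ 2 +
    ∫ y, (deriv f y - deriv (fn n) y) ^ 2 * Real.exp (-|y|) with hHdef
  have hInonneg : ∀ n, 0 ≤ ∫ y, (deriv f y - deriv (fn n) y) ^ 2 * Real.exp (-|y|) :=
    fun n => integral_nonneg fun y => mul_nonneg (sq_nonneg _) (Real.exp_nonneg _)
  have hH0 : ∀ n, 0 ≤ H n := fun n => add_nonneg (sq_nonneg _) (hInonneg n)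
  have hsq_le_H : ∀ n, (f 0 - fn n 0) ^ 2 ≤ H n :=
    fun n => le_add_of_nonneg_right (hInonneg n)
  have hI_le_H : ∀ n, (∫ y, (deriv f y - deriv (fn n) y) ^ 2 * Real.exp (-|y|)) ≤ H n :=
    fun n => le_add_of_nonneg_left (sq_nonneg _)
  constructor
  · -- convergence of integrals
    have hsqrtH : Tendsto (fun n => Real.sqrt (H n)) atTop (nhds 0) := by
      have := (Real.continuous_sqrt.tendsto 0).comp hconv
      rwa [Real.sqrt_zero] at this
    obtain ⟨C, hC⟩ := hconv.bddAbove_range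
    have hHC : ∀ n, H n ≤ C := fun n => hC (mem_range_self n)
    -- pointwise convergence
    have h_lim : ∀ z, Tendsto (fun n => fn n z) atTop (nhds (f z)) := by
      intro z
      have hb : ∀ n, |fn n z - f z| ≤ (1 + Real.sqrt (|z| * Real.exp |z|)) * Real.sqrt (H n) := by
        intro n
        have hd := diff_bound hfL (hfnL n) z
        have h1 : |f 0 - fn n 0| ≤ Real.sqrt (H n) := by
          rw [← Real.sqrt_sq_eq_abs]
          exact Real.sqrt_le_sqrt (hsq_le_H n)
        have h2 : Real.sqrt (|z| * Real.exp |z| *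
            ∫ y, (deriv f y - deriv (fn n) y) ^ 2 * Real.exp (-|y|)) ≤
            Real.sqrt (|z| * Real.exp |z|) * Real.sqrt (H n) := by
          rw [← Real.sqrt_mul (by positivity)]
          refine Real.sqrt_le_sqrt ?_
          exact mul_le_mul_of_nonneg_left (hI_le_H n) (by positivity)
        have := abs_sub_comm (fn n z) (f z)
        calc |fn n z - f z| = |f z - fn n z| := abs_sub_comm _ _
          _ ≤ |f 0 - fn n 0| + Real.sqrt (|z| * Real.exp |z| *
              ∫ y, (deriv f y - deriv (fn n) y) ^ 2 * Real.exp (-|y|)) := hd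
          _ ≤ Real.sqrt (H n) + Real.sqrt (|z| * Real.exp |z|) * Real.sqrt (H n) := by
              linarith
          _ = (1 + Real.sqrt (|z| * Real.exp |z|)) * Real.sqrt (H n) := by ring
      have hb0 : Tendsto (fun n => (1 + Real.sqrt (|z| * Real.exp |z|)) * Real.sqrt (H n))
          atTop (nhds 0) := by
        simpa using hsqrtH.const_mul (1 + Real.sqrt (|z| * Real.exp |z|))
      have hz : Tendsto (fun n => fn n z - f z) atTop (nhds 0) :=
        squeeze_zero_norm (fun n => by simpa [Real.norm_eq_abs] using hb n) hb0
      have := hz.add_const (f z)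
      simpa using this
    -- dominated convergence
    have hmeas : ∀ n, AEStronglyMeasurable (fn n) (μ : Measure ℝ) :=
      fun n => (hfnL n).continuous.aestronglyMeasurable
    have h_bound : ∀ n, ∀ᵐ z ∂(μ : Measure ℝ),
        ‖fn n z‖ ≤ (|f 0| + Real.sqrt C) + |z| := by
      intro n
      refine Eventually.of_forall fun z => ?_
      have h1 : |fn n z - fn n 0| ≤ |z - 0| := lip_dist (hfnL n) z 0
      have h2 : |fn n 0| - |f 0| ≤ |fn n 0 - f 0| := abs_sub_abs_le_abs_sub _ _
      have h3 : |fn n 0 - f 0| ≤ Real.sqrt (H n) := by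
        rw [abs_sub_comm, ← Real.sqrt_sq_eq_abs]
        exact Real.sqrt_le_sqrt (hsq_le_H n)
      have h4 : Real.sqrt (H n) ≤ Real.sqrt C := Real.sqrt_le_sqrt (hHC n)
      have h5 : |fn n z| - |fn n 0| ≤ |fn n z - fn n 0| := abs_sub_abs_le_abs_sub _ _
      rw [Real.norm_eq_abs]
      have h6 : |z - 0| = |z| := by rw [sub_zero]
      linarith
    have h_int : Integrable (fun z => (|f 0| + Real.sqrt C) + |z|) (μ : Measure ℝ) :=
      (integrable_const _).add hμ
    exact tendsto_integral_of_dominated_convergence _ hmeas h_int h_bound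
      (Eventually.of_forall h_lim)
  · intro n x
    refine ⟨?_, claim2 hfL (hfnL n) x⟩
    calc (∫ y in (0:ℝ)..x, |deriv f y - deriv (fn n) y|) ^ 2
        ≤ |x| * Real.exp |x| * ∫ y, (deriv f y - deriv (fn n) y) ^ 2 * Real.exp (-|y|) :=
          claim1 hfL (hfnL n) x
      _ ≤ |x| * Real.exp |x| *
          ((f 0 - fn n 0) ^ 2 + ∫ y, (deriv f y - deriv (fn n) y) ^ 2 * Real.exp (-|y|)) := by
          refine mul_le_mul_of_nonneg_left (le_add_of_nonneg_left (sq_nonneg _)) (by positivity)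


end
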